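/- (Example 1.4, Jacobi condition) Let U ⊆ ℝ³ be a nonempty open set, let a₁, a₂, a₃ be C² functions and b¹, b², b³ be C¹ functions on U with p := a₁b¹ + a₂b² + a₃b³ nonvanishing on U (i.e. α∧β ≠ 0), and let c′, c″ ∈ ℝ be such that the Vessiot structure equations dα = c′β and dβ = c″ α∧β hold on U, i.e. ∂₂a₃ − ∂₃a₂ = c′b¹, ∂₃a₁ − ∂₁a₃ = c′b², ∂₁a₂ − ∂₂a₁ = c′b³, and ∂₁b¹ + ∂₂b² + ∂₃b³ = c″·p. Then the purely algebraic Jacobi condition c′·c″ = 0 holds. -/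

import Mathlib

/-- The `i`-th partial derivative of a function `f : ℝⁿ → ℝ` at `x`. -/
noncomputable def pd {n : ℕ} (i : Fin n) (f : (Fin n → ℝ) → ℝ) (x : Fin n → ℝ) : ℝ :=
  fderiv ℝ f x (Pi.single i 1)

lemma pd_congr {n : ℕ} {f g : (Fin n → ℝ) → ℝ} {U : Set (Fin n → ℝ)} (hU : IsOpen U)
    {x : Fin n → ℝ} (hx : x ∈ U) (h : ∀ y ∈ U, f y = g y) (i : Fin n) :
    pd i f x = pd i g x := by
  unfold pd
  have : f =ᶠ[nhds x] g := by
    filter_upwards [hU.mem_nhds hx] with y hy using h y hy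
  rw [this.fderiv_eq]

lemma pd_const_mul {n : ℕ} {f : (Fin n → ℝ) → ℝ} {x : Fin n → ℝ}
    (hf : DifferentiableAt ℝ f x) (c : ℝ) (i : Fin n) :
    pd i (fun y => c * f y) x = c * pd i f x := by
  unfold pd
  rw [fderiv_const_mul hf]
  simp

lemma pd_sub {n : ℕ} {f g : (Fin n → ℝ) → ℝ} {x : Fin n → ℝ}
    (hf : DifferentiableAt ℝ f x) (hg : DifferentiableAt ℝ g x) (i : Fin n) :
    pd i (fun y => f y - g y) x = pd i f x - pd i g x := by
  unfold pd
  rw [fderiv_fun_sub hf hg]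
  simp

lemma pd_differentiableAt {n : ℕ} {f : (Fin n → ℝ) → ℝ} {x : Fin n → ℝ}
    (hf : ContDiffAt ℝ 2 f x) (j : Fin n) : DifferentiableAt ℝ (pd j f) x := by
  have hdf : DifferentiableAt ℝ (fderiv ℝ f) x :=
    (hf.fderiv_right (m := 1) (by norm_num)).differentiableAt one_ne_zero
  exact hdf.clm_apply (differentiableAt_const _)

lemma pd_pd_eq {n : ℕ} {f : (Fin n → ℝ) → ℝ} {x : Fin n → ℝ}
    (hf : ContDiffAt ℝ 2 f x) (i j : Fin n) :
    pd i (pd j f) x = fderiv ℝ (fderiv ℝ f) x (Pi.single i 1) (Pi.single j 1) := by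
  have hdf : DifferentiableAt ℝ (fderiv ℝ f) x :=
    (hf.fderiv_right (m := 1) (by norm_num)).differentiableAt one_ne_zero
  have : pd i (pd j f) x
      = fderiv ℝ (fun y => fderiv ℝ f y (Pi.single j 1)) x (Pi.single i 1) := rfl
  rw [this, fderiv_clm_apply hdf (differentiableAt_const _)]
  simp

lemma pd_pd_symm {n : ℕ} {f : (Fin n → ℝ) → ℝ} {x : Fin n → ℝ}
    (hf : ContDiffAt ℝ 2 f x) (i j : Fin n) :
    pd i (pd j f) x = pd j (pd i f) x := by
  rw [pd_pd_eq hf, pd_pd_eq hf]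
  exact hf.isSymmSndFDerivAt (by simp) _ _

/-- Example 1.4, Jacobi condition: on a nonempty open set `U ⊆ ℝ³`, let
`α = (a 0, a 1, a 2)` be a `C²` 1-form and `β` a `C¹` 2-form with components
`(b 0, b 1, b 2)` such that `p = a₁b¹ + a₂b² + a₃b³` is nonvanishing (`α∧β ≠ 0`), and let
`c', c'' ∈ ℝ` be such that the Vessiot structure equations `dα = c'β` and `dβ = c'' α∧β`
hold on `U`.  Then the purely algebraic Jacobi condition `c' · c'' = 0` holds. -/
theorem unimodular_contact_jacobi_condition
    (U : Set (Fin 3 → ℝ)) (hUopen : IsOpen U) (hUne : U.Nonempty)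
    (a b : Fin 3 → (Fin 3 → ℝ) → ℝ)
    (ha : ∀ i, ContDiffOn ℝ 2 (a i) U)
    (hb : ∀ i, ContDiffOn ℝ 1 (b i) U)
    (hp : ∀ y ∈ U, (∑ i, a i y * b i y) ≠ 0)
    (c' c'' : ℝ)
    (e1 : ∀ y ∈ U, pd 1 (a 2) y - pd 2 (a 1) y = c' * b 0 y)
    (e2 : ∀ y ∈ U, pd 2 (a 0) y - pd 0 (a 2) y = c' * b 1 y)
    (e3 : ∀ y ∈ U, pd 0 (a 1) y - pd 1 (a 0) y = c' * b 2 y)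
    (e4 : ∀ y ∈ U, pd 0 (b 0) y + pd 1 (b 1) y + pd 2 (b 2) y = c'' * ∑ i, a i y * b i y) :
    c' * c'' = 0 := by
  obtain ⟨x, hx⟩ := hUne
  have hmem : U ∈ nhds x := hUopen.mem_nhds hx
  have haat : ∀ k, ContDiffAt ℝ 2 (a k) x := fun k => (ha k).contDiffAt hmem
  have hbat : ∀ k, DifferentiableAt ℝ (b k) x :=
    fun k => ((hb k).contDiffAt hmem).differentiableAt one_ne_zero
  -- compute c' * (div β) at x
  have h0 : pd 0 (fun y => c' * b 0 y) x = pd 0 (fun y => pd 1 (a 2) y - pd 2 (a 1) y) x :=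
    (pd_congr hUopen hx (fun y hy => (e1 y hy).symm) 0)
  have h1 : pd 1 (fun y => c' * b 1 y) x = pd 1 (fun y => pd 2 (a 0) y - pd 0 (a 2) y) x :=
    (pd_congr hUopen hx (fun y hy => (e2 y hy).symm) 1)
  have h2 : pd 2 (fun y => c' * b 2 y) x = pd 2 (fun y => pd 0 (a 1) y - pd 1 (a 0) y) x :=
    (pd_congr hUopen hx (fun y hy => (e3 y hy).symm) 2)
  rw [pd_const_mul (hbat 0), pd_sub (pd_differentiableAt (haat 2) 1) (pd_differentiableAt (haat 1) 2)] at h0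
  rw [pd_const_mul (hbat 1), pd_sub (pd_differentiableAt (haat 0) 2) (pd_differentiableAt (haat 2) 0)] at h1
  rw [pd_const_mul (hbat 2), pd_sub (pd_differentiableAt (haat 1) 0) (pd_differentiableAt (haat 0) 1)] at h2
  have hdiv : c' * (pd 0 (b 0) x + pd 1 (b 1) x + pd 2 (b 2) x) = 0 := by
    have s0 := pd_pd_symm (haat 0) 1 2
    have s1 := pd_pd_symm (haat 1) 2 0
    have s2 := pd_pd_symm (haat 2) 0 1
    nlinarith [h0, h1, h2, s0, s1, s2]
  rw [e4 x hx] at hdiv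
  have hpx := hp x hx
  have : (c' * c'') * ∑ i, a i x * b i x = 0 := by ring_nf; ring_nf at hdiv; linarith
  exact (mul_eq_zero.mp this).resolve_right hpx
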